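/- For all nonnegative integers n, sum_{k=0}^n (1/(n+1)) binom(n+1,k+1) binom(n+1,k) x^k = sum_{k=0}^{floor(n/2)} C_k binom(n,2k) x^k (1+x)^{n-2k}, where C_k = binom(2k,k)/(k+1) is the k-th Catalan number. -/

import Mathlib

open Polynomial Finset

private lemma vand8 (a j : ℕ) :
    ∑ k ∈ Finset.range (j + 1), a.choose (k + 1) * j.choose k = (a + j).choose (j + 1) := by
  rw [Nat.add_choose_eq, Finset.Nat.sum_antidiagonal_eq_sum_range_succ_mk,
    Finset.sum_range_succ' (fun i => a.choose i * j.choose (j + 1 - i)) (j + 1)]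
  rw [show j + 1 - 0 = j + 1 by omega, Nat.choose_succ_self, Nat.mul_zero, Nat.add_zero]
  refine Finset.sum_congr rfl fun k hk => ?_
  simp only [Finset.mem_range] at hk
  congr 1
  rw [show j + 1 - (k + 1) = j - k by omega, Nat.choose_symm (by omega)]

private lemma termkey8 (n j k : ℕ) (hj : j ≤ n) (hk : k ≤ n) :
    (catalan k : ℚ) * (n.choose (2 * k)) * (if k ≤ j then ((n - 2 * k).choose (j - k) : ℚ) else 0)
      = 1 / ((n : ℚ) + 1) * ((n + 1).choose j) * ((n + 1 - j).choose (k + 1) * j.choose k) := by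
  have hn1 : ((n : ℚ) + 1) ≠ 0 := by positivity
  by_cases hkj : k ≤ j
  · rw [if_pos hkj]
    by_cases h2k : 2 * k ≤ n
    · by_cases hkjn : k + j ≤ n
      · have F1 : ((k : ℚ) + 1) * catalan k = ((2 * k).choose k : ℚ) := by
          have := succ_mul_catalan_eq_centralBinom k
          rw [Nat.centralBinom_eq_two_mul_choose] at this
          exact_mod_cast this
        have F2 : ((n.choose (2 * k) : ℚ)) * (2 * k).choose k
            = n.choose k * ((n - k).choose k) := by
          have := Nat.choose_mul (n := n) (k := 2 * k) (s := k) (by omega)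
          rw [show 2 * k - k = k by omega] at this
          exact_mod_cast this
        have F3 : (((n - k).choose j : ℚ)) * j.choose k
            = ((n - k).choose k) * ((n - 2 * k).choose (j - k)) := by
          have := Nat.choose_mul (n := n - k) (k := j) (s := k) hkj
          rw [show n - k - k = n - 2 * k by omega] at this
          exact_mod_cast this
        have F4 : ((n : ℚ) + 1) * n.choose k = ((n + 1).choose (k + 1)) * ((k : ℚ) + 1) := by
          have := Nat.add_one_mul_choose_eq n k
          exact_mod_cast this
        have F5 : (((n + 1).choose (k + 1) : ℚ)) * ((n - k).choose j)
            = ((n + 1).choose j) * ((n + 1 - j).choose (k + 1)) := by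
          have h1 := Nat.choose_mul (n := n + 1) (k := k + 1 + j) (s := k + 1) (by omega)
          have h2 := Nat.choose_mul (n := n + 1) (k := k + 1 + j) (s := j) (by omega)
          rw [show n + 1 - (k + 1) = n - k by omega] at h1
          rw [show k + 1 + j - (k + 1) = j by omega] at h1
          rw [show k + 1 + j - j = k + 1 by omega] at h2
          have h3 : (k + 1 + j).choose (k + 1) = (k + 1 + j).choose j := by
            rw [← Nat.choose_symm (by omega)]
            congr 1
            omega
          rw [h3] at h1
          have : (n + 1).choose (k + 1) * (n - k).choose j
              = (n + 1).choose j * (n + 1 - j).choose (k + 1) := by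
            omega
          exact_mod_cast this
        have hck : ((k : ℚ) + 1) ≠ 0 := by positivity
        have key : ((k : ℚ) + 1) * (((n : ℚ) + 1) * ((catalan k : ℚ) * (n.choose (2 * k)) * ((n - 2 * k).choose (j - k))))
            = ((k : ℚ) + 1) * (((n + 1).choose j : ℚ) * (((n + 1 - j).choose (k + 1) : ℚ) * (j.choose k : ℚ))) := by
          linear_combination (((n : ℚ) + 1) * (n.choose (2 * k)) * ((n - 2 * k).choose (j - k))) * F1
            + (((n : ℚ) + 1) * ((n - 2 * k).choose (j - k))) * F2
            - (((n : ℚ) + 1) * (n.choose k)) * F3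
            + (((n - k).choose j : ℚ) * (j.choose k)) * F4
            + (((k : ℚ) + 1) * (j.choose k)) * F5
        have h3 := mul_left_cancel₀ hck key
        field_simp
        linear_combination h3
      · have z1 : (n - 2 * k).choose (j - k) = 0 := Nat.choose_eq_zero_of_lt (by omega)
        have z2 : (n + 1 - j).choose (k + 1) = 0 := Nat.choose_eq_zero_of_lt (by omega)
        rw [z1, z2]
        simp
    · have z1 : n.choose (2 * k) = 0 := Nat.choose_eq_zero_of_lt (by omega)
      have z2 : (n + 1 - j).choose (k + 1) = 0 := Nat.choose_eq_zero_of_lt (by omega)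
      rw [z1, z2]
      simp
  · rw [if_neg hkj, Nat.choose_eq_zero_of_lt (by omega : j < k)]
    simp

private lemma coeffkey8 (n j : ℕ) (hj : j ≤ n) :
    ∑ k ∈ Finset.range (n / 2 + 1),
        (catalan k : ℚ) * (n.choose (2 * k)) *
          (if k ≤ j then ((n - 2 * k).choose (j - k) : ℚ) else 0)
      = 1 / ((n : ℚ) + 1) * ((n + 1).choose (j + 1)) * ((n + 1).choose j) := by
  have hext : ∑ k ∈ Finset.range (n / 2 + 1),
        (catalan k : ℚ) * (n.choose (2 * k)) *
          (if k ≤ j then ((n - 2 * k).choose (j - k) : ℚ) else 0)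
      = ∑ k ∈ Finset.range (n + 1),
        (catalan k : ℚ) * (n.choose (2 * k)) *
          (if k ≤ j then ((n - 2 * k).choose (j - k) : ℚ) else 0) := by
    refine Finset.sum_subset (Finset.range_subset_range.2 (by omega)) fun x hx hnx => ?_
    simp only [Finset.mem_range] at hx hnx
    rw [Nat.choose_eq_zero_of_lt (show n < 2 * x by omega)]
    simp
  rw [hext]
  rw [Finset.sum_congr rfl fun k hk =>
    termkey8 n j k hj (by simp only [Finset.mem_range] at hk; omega)]
  have hsum : ∑ k ∈ Finset.range (n + 1),
      (((n + 1 - j).choose (k + 1) : ℚ) * (j.choose k : ℚ))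
      = ((n + 1).choose (j + 1) : ℚ) := by
    have hshr : ∑ k ∈ Finset.range (j + 1), ((n + 1 - j).choose (k + 1) * j.choose k)
        = ∑ k ∈ Finset.range (n + 1), ((n + 1 - j).choose (k + 1) * j.choose k) := by
      refine Finset.sum_subset (Finset.range_subset_range.2 (by omega)) fun x hx hnx => ?_
      simp only [Finset.mem_range] at hx hnx
      rw [Nat.choose_eq_zero_of_lt (show j < x by omega)]
      simp
    have := vand8 (n + 1 - j) j
    rw [hshr, show n + 1 - j + j = n + 1 by omega] at this
    exact_mod_cast this
  calc ∑ k ∈ Finset.range (n + 1),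
        1 / ((n : ℚ) + 1) * ((n + 1).choose j) * (((n + 1 - j).choose (k + 1) : ℚ) * (j.choose k : ℚ))
      = 1 / ((n : ℚ) + 1) * ((n + 1).choose j) *
          ∑ k ∈ Finset.range (n + 1), (((n + 1 - j).choose (k + 1) : ℚ) * (j.choose k : ℚ)) := by
        rw [Finset.mul_sum]
    _ = 1 / ((n : ℚ) + 1) * ((n + 1).choose (j + 1)) * ((n + 1).choose j) := by
        rw [hsum]; ring

theorem stmt8 (n : ℕ) :
    (∑ k ∈ Finset.range (n + 1),
        C ((1 / ((n : ℚ) + 1)) * ((n + 1).choose (k + 1)) * ((n + 1).choose k)) * X ^ k) =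
      ∑ k ∈ Finset.range (n / 2 + 1),
        C ((catalan k : ℚ) * (n.choose (2 * k))) * X ^ k * (1 + X) ^ (n - 2 * k) := by
  ext j
  rw [Polynomial.finset_sum_coeff, Polynomial.finset_sum_coeff]
  have hR : ∀ k, (C ((catalan k : ℚ) * (n.choose (2 * k))) * X ^ k
      * (1 + X) ^ (n - 2 * k)).coeff j
      = (catalan k : ℚ) * (n.choose (2 * k)) *
          (if k ≤ j then ((n - 2 * k).choose (j - k) : ℚ) else 0) := by
    intro k
    rw [mul_right_comm, Polynomial.coeff_mul_X_pow']
    split_ifs with h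
    · rw [Polynomial.coeff_C_mul, Polynomial.coeff_one_add_X_pow]
    · simp
  rw [Finset.sum_congr rfl fun k _ => hR k]
  have hL : ∑ k ∈ Finset.range (n + 1),
      (C ((1 / ((n : ℚ) + 1)) * ((n + 1).choose (k + 1)) * ((n + 1).choose k)) * X ^ k).coeff j
      = if j ∈ Finset.range (n + 1)
          then (1 / ((n : ℚ) + 1)) * ((n + 1).choose (j + 1)) * ((n + 1).choose j) else 0 := by
    simp only [Polynomial.coeff_C_mul, Polynomial.coeff_X_pow, mul_ite, mul_one, mul_zero]
    exact Finset.sum_ite_eq (Finset.range (n + 1)) j _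
  rw [hL]
  by_cases hjn : j ≤ n
  · rw [if_pos (by simp only [Finset.mem_range]; omega), coeffkey8 n j hjn]
  · rw [if_neg (by simp only [Finset.mem_range]; omega)]
    refine (Finset.sum_eq_zero fun k hk => ?_).symm
    simp only [Finset.mem_range] at hk
    rw [if_pos (by omega), Nat.choose_eq_zero_of_lt (show n - 2 * k < j - k by omega)]
    simp
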